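/- Let f, g ∈ ℂ[z] be polynomials, not both zero, let m = max(deg f, deg g), and let n ≥ m. Then the dimension of the kernel of the n×n Bezoutian matrix B_n = H_f·T_g − H_g·T_f (of size n) equals n − m + deg gcd(f, g). -/

import Mathlib

open Polynomial Matrix

/-- The `n × n` Hankel matrix of a polynomial `f`: `(H_f)_{jk} = f_{j+k+1}`. -/
noncomputable def Hk (n : ℕ) (f : ℂ[X]) : Matrix (Fin n) (Fin n) ℂ :=
  Matrix.of fun j k => f.coeff ((j : ℕ) + (k : ℕ) + 1)

/-- The `n × n` upper triangular Toeplitz matrix of a polynomial `f`: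
`(T_f)_{jk} = f_{k-j}` if `k ≥ j`, and `0` otherwise. -/
noncomputable def Tp (n : ℕ) (f : ℂ[X]) : Matrix (Fin n) (Fin n) ℂ :=
  Matrix.of fun j k => if (j : ℕ) ≤ (k : ℕ) then f.coeff ((k : ℕ) - (j : ℕ)) else 0

/-- The `n × n` reverse identity matrix `Z`. -/
noncomputable def Rv (n : ℕ) : Matrix (Fin n) (Fin n) ℂ :=
  Matrix.of fun j k => if (j : ℕ) + (k : ℕ) = n - 1 then 1 else 0

/-- The `n × n` Bezoutian matrix of `f` and `g`: `B = H_f T_g - H_g T_f`. -/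
noncomputable def Bz (n : ℕ) (f g : ℂ[X]) : Matrix (Fin n) (Fin n) ℂ :=
  Hk n f * Tp n g - Hk n g * Tp n f

/-- The `2n × 2n` resultant matrix of `f` and `g`:
`R = [[T_f, Z H_f], [T_g, Z H_g]]`. -/
noncomputable def Rs (n : ℕ) (f g : ℂ[X]) : Matrix (Fin n ⊕ Fin n) (Fin n ⊕ Fin n) ℂ :=
  Matrix.fromBlocks (Tp n f) (Rv n * Hk n f) (Tp n g) (Rv n * Hk n g)

/-! ### Auxiliary development -/

/-- Truncation of a polynomial below degree `n`. -/
noncomputable def tr (n : ℕ) (p : ℂ[X]) : ℂ[X] := ∑ i ∈ Finset.range n, monomial i (p.coeff i)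

lemma tr_coeff (n : ℕ) (p : ℂ[X]) (i : ℕ) :
    (tr n p).coeff i = if i < n then p.coeff i else 0 := by
  simp only [tr, finset_sum_coeff, coeff_monomial]
  rw [Finset.sum_ite_eq' (Finset.range n) i (fun j => p.coeff j)]
  simp [Finset.mem_range]

lemma tr_coeff_of_lt {n i : ℕ} (p : ℂ[X]) (h : i < n) : (tr n p).coeff i = p.coeff i := by
  simp [tr_coeff, h]

lemma tr_coeff_of_ge {n i : ℕ} (p : ℂ[X]) (h : n ≤ i) : (tr n p).coeff i = 0 := by
  simp [tr_coeff, Nat.not_lt.mpr h]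

lemma X_pow_dvd_sub_tr (n : ℕ) (p : ℂ[X]) : (X : ℂ[X]) ^ n ∣ p - tr n p := by
  rw [X_pow_dvd_iff]
  intro d hd
  simp [tr_coeff_of_lt _ hd]

lemma tr_eq_self {n : ℕ} {p : ℂ[X]} (h : ∀ i, n ≤ i → p.coeff i = 0) : tr n p = p := by
  ext i
  rcases lt_or_ge i n with hi | hi
  · exact tr_coeff_of_lt _ hi
  · rw [tr_coeff_of_ge _ hi, h i hi]

lemma tr_mul_tr (n : ℕ) (a b : ℂ[X]) : tr n (a * tr n b) = tr n (a * b) := by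
  ext i
  rcases lt_or_ge i n with hi | hi
  · rw [tr_coeff_of_lt _ hi, tr_coeff_of_lt _ hi, coeff_mul, coeff_mul]
    apply Finset.sum_congr rfl
    intro x hx
    rw [Finset.HasAntidiagonal.mem_antidiagonal] at hx
    rw [tr_coeff_of_lt _ (by omega : x.2 < n)]
  · rw [tr_coeff_of_ge _ hi, tr_coeff_of_ge _ hi]

/-- The reversal polynomial of a vector: `qp n v = ∑ v_j X^(n-1-j)`. -/
noncomputable def qp (n : ℕ) : (Fin n → ℂ) →ₗ[ℂ] ℂ[X] :=
  ∑ j : Fin n, (Polynomial.monomial ((j : ℕ))).comp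
    ((LinearMap.proj (Fin.rev j)) : (Fin n → ℂ) →ₗ[ℂ] ℂ)

lemma qp_apply (n : ℕ) (v : Fin n → ℂ) :
    qp n v = ∑ j : Fin n, monomial (j : ℕ) (v (Fin.rev j)) := by
  simp [qp, LinearMap.sum_apply]

lemma qp_coeff (n : ℕ) (v : Fin n → ℂ) (t : ℕ) :
    (qp n v).coeff t = if h : t < n then v (Fin.rev ⟨t, h⟩) else 0 := by
  rw [qp_apply, finset_sum_coeff]
  simp only [coeff_monomial]
  split
  · next h =>
    rw [Finset.sum_eq_single (⟨t, h⟩ : Fin n)]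
    · simp
    · intro b _ hb
      rw [if_neg]; intro hc; apply hb; exact Fin.ext hc
    · simp
  · next h =>
    apply Finset.sum_eq_zero
    intro b _
    rw [if_neg]; intro hc; exact h (hc ▸ b.isLt)

lemma qp_coeff_of_ge {n t : ℕ} (v : Fin n → ℂ) (h : n ≤ t) : (qp n v).coeff t = 0 := by
  rw [qp_coeff]; rw [dif_neg (by omega)]

lemma Lmul {n : ℕ} (a c : ℂ[X]) (j : ℕ) :
    (a * tr n c).coeff (n + j) =
      ∑ l ∈ Finset.range n, a.coeff (j + l + 1) * c.coeff (n - 1 - l) := by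
  rw [coeff_mul, Finset.Nat.sum_antidiagonal_eq_sum_range_succ_mk]
  simp only [tr_coeff]
  have key : ∀ x ∈ Finset.range (n + j + 1),
      (a.coeff x * if n + j - x < n then c.coeff (n + j - x) else 0) ≠ 0 → j + 1 ≤ x := by
    intro x hx hne
    by_contra hc
    push_neg at hc
    rw [if_neg (by omega)] at hne
    simp at hne
  rw [← Finset.sum_filter_of_ne key]
  apply Finset.sum_nbij' (fun x => x - (j + 1)) (fun l => j + 1 + l)
  · intro x hx
    simp only [Finset.mem_filter, Finset.mem_range] at hx ⊢
    omega
  · intro l hl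
    simp only [Finset.mem_filter, Finset.mem_range] at hl ⊢
    omega
  · intro x hx; simp only [Finset.mem_filter, Finset.mem_range] at hx; omega
  · intro l hl; simp only [Finset.mem_range] at hl; omega
  · intro x hx
    simp only [Finset.mem_filter, Finset.mem_range] at hx
    rw [if_pos (by omega)]
    congr 2 <;> omega

lemma Lcorr {n : ℕ} (b : ℂ[X]) (v : Fin n → ℂ) (l : ℕ) (hl : l < n) :
    (b * qp n v).coeff (n - 1 - l) =
      ∑ k : Fin n, (if l ≤ (k : ℕ) then b.coeff ((k : ℕ) - l) else 0) * v k := by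
  rw [coeff_mul, Finset.Nat.sum_antidiagonal_eq_sum_range_succ_mk]
  rw [show (∑ k : Fin n, (if l ≤ (k : ℕ) then b.coeff ((k : ℕ) - l) else 0) * v k)
      = ∑ k ∈ Finset.univ.filter (fun k : Fin n => l ≤ (k : ℕ)),
          b.coeff ((k : ℕ) - l) * v k by
    rw [Finset.sum_filter]
    apply Finset.sum_congr rfl
    intro k _
    split <;> simp]
  refine Finset.sum_bij' (fun u hu => (⟨l + u, by
      simp only [Finset.mem_range] at hu; omega⟩ : Fin n))
    (fun k hk => (k : ℕ) - l) ?_ ?_ ?_ ?_ ?_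
  · intro u hu
    simp only [Finset.mem_filter, Finset.mem_univ, Fin.val_mk, true_and]
    omega
  · intro k hk
    simp only [Finset.mem_filter, Finset.mem_univ, true_and] at hk
    simp only [Finset.mem_range]
    omega
  · intro u hu
    simp only [Finset.mem_range] at hu
    show l + u - l = u
    omega
  · intro k hk
    simp only [Finset.mem_filter, Finset.mem_univ, true_and] at hk
    ext
    show l + ((k : ℕ) - l) = (k : ℕ)
    omega
  · intro u hu
    simp only [Finset.mem_range] at hu
    rw [qp_coeff, dif_pos (by omega : n - 1 - l - u < n)]
    show b.coeff u * v (Fin.rev ⟨n - 1 - l - u, _⟩) = b.coeff (l + u - l) * v ⟨l + u, _⟩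
    congr 2
    · omega
    · ext
      simp only [Fin.val_rev, Fin.val_mk]
      omega

lemma mulVec_HT {n : ℕ} (a b : ℂ[X]) (v : Fin n → ℂ) (j : Fin n) :
    (Hk n a * Tp n b).mulVec v j = (a * tr n (b * qp n v)).coeff (n + (j : ℕ)) := by
  calc (Hk n a * Tp n b).mulVec v j
      = ∑ l : Fin n, ∑ k : Fin n, a.coeff ((j : ℕ) + (l : ℕ) + 1) *
          ((if (l : ℕ) ≤ (k : ℕ) then b.coeff ((k : ℕ) - (l : ℕ)) else 0) * v k) := by
        simp only [Matrix.mulVec, dotProduct, Matrix.mul_apply, Hk, Tp, Matrix.of_apply,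
          Finset.sum_mul]
        rw [Finset.sum_comm]
        apply Finset.sum_congr rfl
        intro l _
        apply Finset.sum_congr rfl
        intro k _
        ring
    _ = ∑ l : Fin n, a.coeff ((j : ℕ) + (l : ℕ) + 1) * (b * qp n v).coeff (n - 1 - (l : ℕ)) := by
        apply Finset.sum_congr rfl
        intro l _
        rw [Lcorr b v (l : ℕ) l.isLt, Finset.mul_sum]
    _ = ∑ l ∈ Finset.range n, a.coeff ((j : ℕ) + l + 1) * (b * qp n v).coeff (n - 1 - l) :=
        Fin.sum_univ_eq_sum_range (fun l => a.coeff ((j : ℕ) + l + 1) *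
          (b * qp n v).coeff (n - 1 - l)) n
    _ = (a * tr n (b * qp n v)).coeff (n + (j : ℕ)) := (Lmul _ _ _).symm

lemma mulVec_Bz {n : ℕ} (f g : ℂ[X]) (v : Fin n → ℂ) (j : Fin n) :
    (Bz n f g).mulVec v j =
      (f * tr n (g * qp n v) - g * tr n (f * qp n v)).coeff (n + (j : ℕ)) := by
  rw [Bz, Matrix.sub_mulVec]
  simp only [Pi.sub_apply]
  rw [mulVec_HT f g v j, mulVec_HT g f v j, coeff_sub]

lemma Dlow {n : ℕ} (f g q : ℂ[X]) {i : ℕ} (hi : i < n) :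
    (f * tr n (g * q) - g * tr n (f * q)).coeff i = 0 := by
  have h : f * tr n (g * q) - g * tr n (f * q)
      = g * ((f * q) - tr n (f * q)) - f * ((g * q) - tr n (g * q)) := by ring
  have hdvd : (X : ℂ[X]) ^ n ∣ f * tr n (g * q) - g * tr n (f * q) := by
    rw [h]
    exact dvd_sub ((X_pow_dvd_sub_tr n (f * q)).mul_left g)
      ((X_pow_dvd_sub_tr n (g * q)).mul_left f)
  exact X_pow_dvd_iff.mp hdvd i hi

lemma Dhigh {n m : ℕ} {a : ℂ[X]} (c : ℂ[X]) (ha : a.natDegree ≤ m) {i : ℕ} (hi : n + m ≤ i) :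
    (a * tr n c).coeff i = 0 := by
  rw [coeff_mul]
  apply Finset.sum_eq_zero
  intro x hx
  rw [Finset.HasAntidiagonal.mem_antidiagonal] at hx
  rcases lt_or_ge x.2 n with h2 | h2
  · rw [coeff_eq_zero_of_natDegree_lt (show a.natDegree < x.1 by omega), zero_mul]
  · rw [tr_coeff_of_ge _ h2, mul_zero]

/-- The crucial coprime "window" lemma. -/
lemma window {n k : ℕ} (hkn : k ≤ n) {f1 g1 : ℂ[X]} (r : ℂ[X]) (cop : IsCoprime f1 g1)
    (hf1 : f1 ≠ 0) (hg1 : g1 ≠ 0) (hdm : max f1.natDegree g1.natDegree = k)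
    (hr : ∀ i, n ≤ i → r.coeff i = 0) :
    f1 * tr n (g1 * r) = g1 * tr n (f1 * r) ↔ ∀ i, n - k ≤ i → i < n → r.coeff i = 0 := by
  constructor
  · intro hEq
    have h0 : f1 ∣ g1 * tr n (f1 * r) := hEq ▸ dvd_mul_right f1 (tr n (g1 * r))
    obtain ⟨h, hh⟩ := cop.dvd_of_dvd_mul_left h0
    have hA : tr n (g1 * r) = g1 * h := by
      apply mul_left_cancel₀ hf1
      rw [hEq, hh]; ring
    have hdvd1 : (X : ℂ[X]) ^ n ∣ f1 * (r - h) := by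
      have : f1 * (r - h) = (f1 * r) - tr n (f1 * r) := by rw [hh]; ring
      rw [this]; exact X_pow_dvd_sub_tr n (f1 * r)
    have hdvd2 : (X : ℂ[X]) ^ n ∣ g1 * (r - h) := by
      have : g1 * (r - h) = (g1 * r) - tr n (g1 * r) := by rw [hA]; ring
      rw [this]; exact X_pow_dvd_sub_tr n (g1 * r)
    obtain ⟨a, b, hab⟩ := cop
    have hdvd : (X : ℂ[X]) ^ n ∣ r - h := by
      have : r - h = a * (f1 * (r - h)) + b * (g1 * (r - h)) := by
        rw [show a * (f1 * (r - h)) + b * (g1 * (r - h)) = (a * f1 + b * g1) * (r - h) by ring,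
          hab, one_mul]
      rw [this]
      exact dvd_add (hdvd1.mul_left a) (hdvd2.mul_left b)
    have hrh : ∀ i, i < n → r.coeff i = h.coeff i := by
      intro i hi
      have := X_pow_dvd_iff.mp hdvd i hi
      rw [coeff_sub, sub_eq_zero] at this
      exact this
    have hdegh : ∀ i, n - k ≤ i → i < n → h.coeff i = 0 := by
      intro i hik hin
      rcases eq_or_ne h 0 with rfl | hh0
      · simp
    -- degree bounds
      · have hb1 : f1.natDegree + h.natDegree ≤ n - 1 := by
          have hne : f1 * h ≠ 0 := mul_ne_zero hf1 hh0
          have : (f1 * h).natDegree ≤ n - 1 := by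
            apply Polynomial.natDegree_le_iff_coeff_eq_zero.mpr
            intro i0 hi0
            rw [← hh, tr_coeff_of_ge _ (by omega)]
          rwa [natDegree_mul hf1 hh0] at this
        have hb2 : g1.natDegree + h.natDegree ≤ n - 1 := by
          have : (g1 * h).natDegree ≤ n - 1 := by
            apply Polynomial.natDegree_le_iff_coeff_eq_zero.mpr
            intro i0 hi0
            rw [← hA, tr_coeff_of_ge _ (by omega)]
          rwa [natDegree_mul hg1 hh0] at this
        apply coeff_eq_zero_of_natDegree_lt
        omega
    intro i hik hin
    rw [hrh i hin]
    exact hdegh i hik hin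
  · intro hw
    have hrk : ∀ i, n - k ≤ i → r.coeff i = 0 := by
      intro i hi
      rcases lt_or_ge i n with hin | hin
      · exact hw i hi hin
      · exact hr i hin
    have hmul : ∀ (p : ℂ[X]), p.natDegree ≤ k → ∀ i, n ≤ i → (p * r).coeff i = 0 := by
      intro p hp i hi
      rw [coeff_mul]
      apply Finset.sum_eq_zero
      intro x hx
      rw [Finset.HasAntidiagonal.mem_antidiagonal] at hx
      rcases le_or_gt (n - k) x.2 with h2 | h2
      · rw [hrk x.2 h2, mul_zero]
      · rw [coeff_eq_zero_of_natDegree_lt (show p.natDegree < x.1 by omega), zero_mul]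
    rw [tr_eq_self (hmul g1 (by omega) ), tr_eq_self (hmul f1 (by omega))]
    ring

theorem bezoutian_nullity_general (f g : ℂ[X]) (hfg : f ≠ 0 ∨ g ≠ 0)
    (m : ℕ) (hm : m = max f.natDegree g.natDegree) (n : ℕ) (hn : m ≤ n) :
    Module.finrank ℂ (LinearMap.ker (Matrix.toLin' (Bz n f g))) =
      n - m + (EuclideanDomain.gcd f g).natDegree := by
  classical
  set d : ℂ[X] := EuclideanDomain.gcd f g with hd
  have hdne : d ≠ 0 := by
    intro h
    rcases EuclideanDomain.gcd_eq_zero_iff.mp h with ⟨h1, h2⟩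
    rcases hfg with h | h <;> [exact h h1; exact h h2]
  obtain ⟨f1, hf1⟩ : d ∣ f := EuclideanDomain.gcd_dvd_left f g
  obtain ⟨g1, hg1⟩ : d ∣ g := EuclideanDomain.gcd_dvd_right f g
  set δ : ℕ := d.natDegree with hδ
  have hδm : δ ≤ m := by
    rcases hfg with h | h
    · exact le_trans (natDegree_le_of_dvd (EuclideanDomain.gcd_dvd_left f g) h)
        (hm ▸ le_max_left _ _)
    · exact le_trans (natDegree_le_of_dvd (EuclideanDomain.gcd_dvd_right f g) h)
        (hm ▸ le_max_right _ _)
  set k : ℕ := m - δ with hk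
  clear_value δ k
  have hkn : k ≤ n := by omega
  -- the key equivalence
  have key : ∀ v : Fin n → ℂ, (Bz n f g).mulVec v = 0 ↔
      ∀ b : Fin k, (d * qp n v).coeff (n - 1 - (b : ℕ)) = 0 := by
    intro v
    set q : ℂ[X] := qp n v with hq
    set r : ℂ[X] := tr n (d * q) with hr
    have hwindow_iff : (∀ b : Fin k, (d * q).coeff (n - 1 - (b : ℕ)) = 0) ↔
        (∀ i, n - k ≤ i → i < n → r.coeff i = 0) := by
      constructor
      · intro hb i h1 h2
        rw [hr, tr_coeff_of_lt _ h2]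
        have hb' := hb ⟨n - 1 - i, by omega⟩
        rwa [show n - 1 - (n - 1 - i) = i by omega] at hb'
      · intro hw b
        have hbk : (b : ℕ) < k := b.isLt
        have := hw (n - 1 - (b : ℕ)) (by omega) (by omega)
        rwa [hr, tr_coeff_of_lt _ (by omega)] at this
    have step1 : (Bz n f g).mulVec v = 0 ↔
        f * tr n (g * q) = g * tr n (f * q) := by
      constructor
      · intro h0
        rw [← sub_eq_zero]
        ext i
        rw [coeff_zero]
        rcases lt_or_ge i n with hi | hi
        · exact Dlow f g q hi
        · rcases lt_or_ge i (n + n) with hi2 | hi2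
          · have hj := congrFun h0 ⟨i - n, by omega⟩
            rw [mulVec_Bz, Pi.zero_apply] at hj
            rwa [show n + (i - n) = i by omega] at hj
          · rw [coeff_sub]
            rw [Dhigh (g * q) (show f.natDegree ≤ m from hm ▸ le_max_left _ _) (by omega),
              Dhigh (f * q) (show g.natDegree ≤ m from hm ▸ le_max_right _ _) (by omega)]
            ring
      · intro hE
        funext j
        rw [mulVec_Bz, sub_eq_zero.mpr hE, coeff_zero, Pi.zero_apply]
    have e1 : f * tr n (g * q) = d * (f1 * tr n (g * q)) := by
      rw [hf1, mul_assoc]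
    have e2 : g * tr n (f * q) = d * (g1 * tr n (f * q)) := by
      rw [hg1, mul_assoc]
    have step2 : (f * tr n (g * q) = g * tr n (f * q)) ↔
        f1 * tr n (g * q) = g1 * tr n (f * q) := by
      rw [e1, e2, mul_right_inj' hdne]
    have hAeq : tr n (g * q) = tr n (g1 * r) := by
      have h1 : g * q = g1 * (d * q) := by rw [hg1]; ring
      rw [h1, hr, tr_mul_tr]
    have hCeq : tr n (f * q) = tr n (f1 * r) := by
      have h1 : f * q = f1 * (d * q) := by rw [hf1]; ring
      rw [h1, hr, tr_mul_tr]
    rw [step1, step2, hAeq, hCeq, hwindow_iff]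
    -- now split on degenerate cases
    rcases eq_or_ne f 0 with hf0 | hf0
    · -- f = 0 : k = 0, both sides trivially true
      have hg0 : g ≠ 0 := hfg.resolve_left (not_not_intro hf0)
      have hdg : d = g := by rw [hd, hf0, EuclideanDomain.gcd_zero_left]
      have hk0 : k = 0 := by
        rw [hk, hδ, hdg, hm, hf0]
        simp
      have hf10 : f1 = 0 := by
        have : d * f1 = 0 := by rw [← hf1, hf0]
        rcases mul_eq_zero.mp this with h | h
        · exact absurd h hdne
        · exact h
      have hg11 : g1 = 1 := by
        apply mul_left_cancel₀ hdne
        rw [← hg1, hdg, mul_one]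
      constructor
      · intro _ i h1 h2
        exfalso; omega
      · intro _
        rw [hf10, hg11]
        simp [tr]
    · rcases eq_or_ne g 0 with hg0 | hg0
      · have hdf : d = f := by rw [hd, hg0, EuclideanDomain.gcd_zero_right]
        have hk0 : k = 0 := by
          rw [hk, hδ, hdf, hm, hg0]
          simp
        have hg10 : g1 = 0 := by
          have : d * g1 = 0 := by rw [← hg1, hg0]
          rcases mul_eq_zero.mp this with h | h
          · exact absurd h hdne
          · exact h
        have hf11 : f1 = 1 := by
          apply mul_left_cancel₀ hdne
          rw [← hf1, hdf, mul_one]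
        constructor
        · intro _ i h1 h2
          exfalso; omega
        · intro _
          rw [hg10, hf11]
          simp [tr]
      · -- main case: f ≠ 0, g ≠ 0
        have hf1ne : f1 ≠ 0 := by
          intro h; apply hf0; rw [hf1, h, mul_zero]
        have hg1ne : g1 ≠ 0 := by
          intro h; apply hg0; rw [hg1, h, mul_zero]
        have cop : IsCoprime f1 g1 := by
          have hab := EuclideanDomain.gcd_eq_gcd_ab f g
          refine ⟨EuclideanDomain.gcdA f g, EuclideanDomain.gcdB f g, ?_⟩
          apply mul_left_cancel₀ hdne
          rw [mul_one]
          conv_rhs => rw [hd, hab]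
          rw [hf1, hg1]
          ring
        have hdm : max f1.natDegree g1.natDegree = k := by
          have hdf : f.natDegree = δ + f1.natDegree := by
            rw [hf1, natDegree_mul hdne hf1ne, hδ]
          have hdg : g.natDegree = δ + g1.natDegree := by
            rw [hg1, natDegree_mul hdne hg1ne, hδ]
          have : m = max (δ + f1.natDegree) (δ + g1.natDegree) := by
            rw [hm, hdf, hdg]
          omega
        exact window hkn r cop hf1ne hg1ne hdm (fun i hi => tr_coeff_of_ge _ hi)
  -- the linear map S
  set S : (Fin n → ℂ) →ₗ[ℂ] (Fin k → ℂ) :=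
    LinearMap.pi fun b : Fin k => (Polynomial.lcoeff ℂ (n - 1 - (b : ℕ))).comp
      ((LinearMap.mulLeft ℂ d).comp (qp n)) with hS
  have hSapp : ∀ (v : Fin n → ℂ) (b : Fin k), S v b = (d * qp n v).coeff (n - 1 - (b : ℕ)) := by
    intro v b
    simp [hS, LinearMap.pi_apply, LinearMap.mulLeft_apply, lcoeff_apply]
  have hker : LinearMap.ker (Matrix.toLin' (Bz n f g)) = LinearMap.ker S := by
    ext v
    simp only [LinearMap.mem_ker, Matrix.toLin'_apply]
    rw [key v, funext_iff]
    constructor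
    · intro h b; rw [hSapp]; exact h b
    · intro h b; rw [← hSapp]; exact h b
  -- surjectivity of S
  have hsum : δ + k = m := by rw [hk]; exact Nat.add_sub_cancel' hδm
  have hposlt : ∀ b : Fin k, δ + (b : ℕ) < n := by
    intro b
    have h1 : (b : ℕ) < k := b.isLt
    calc δ + (b : ℕ) < δ + k := Nat.add_lt_add_left h1 δ
      _ = m := hsum
      _ ≤ n := hn
  set e : Fin k → (Fin n → ℂ) := fun b' => Pi.single (⟨δ + (b' : ℕ), hposlt b'⟩ : Fin n) 1
    with he
  have hqpe : ∀ b' : Fin k, qp n (e b') = monomial (n - 1 - (δ + (b' : ℕ))) 1 := by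
    intro b'
    rw [qp_apply]
    rw [Finset.sum_eq_single (Fin.rev (⟨δ + (b' : ℕ), hposlt b'⟩ : Fin n))]
    · rw [Fin.rev_rev]
      simp only [he, Pi.single_eq_same]
      rw [show ((Fin.rev (⟨δ + (b' : ℕ), hposlt b'⟩ : Fin n)) : ℕ) = n - 1 - (δ + (b' : ℕ)) by
        simp only [Fin.val_rev, Fin.val_mk]; omega]
    · intro j _ hj
      have hne : Fin.rev j ≠ (⟨δ + (b' : ℕ), hposlt b'⟩ : Fin n) := by
        intro hc
        apply hj
        rw [← Fin.rev_rev j, hc]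
      simp only [he]
      rw [Pi.single_eq_of_ne hne, map_zero]
    · simp
  set M : Matrix (Fin k) (Fin k) ℂ := Matrix.of fun b b' => S (e b') b with hM
  have hMval : ∀ b b' : Fin k, M b b' =
      if n - 1 - (δ + (b' : ℕ)) ≤ n - 1 - (b : ℕ)
      then d.coeff (n - 1 - (b : ℕ) - (n - 1 - (δ + (b' : ℕ)))) else 0 := by
    intro b b'
    rw [hM, Matrix.of_apply, hSapp, hqpe, ← X_pow_eq_monomial, coeff_mul_X_pow']
  have hMtri : ∀ b b' : Fin k, b < b' → M b b' = 0 := by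
    intro b b' hbb
    have hb' := hposlt b'
    have hb := hposlt b
    have hbb' : (b : ℕ) < (b' : ℕ) := hbb
    rw [hMval, if_pos (by omega),
      show n - 1 - (b : ℕ) - (n - 1 - (δ + (b' : ℕ))) = δ + (b' : ℕ) - (b : ℕ) by omega]
    apply coeff_eq_zero_of_natDegree_lt
    omega
  have hMdiag : ∀ b : Fin k, M b b = d.coeff δ := by
    intro b
    have hb := hposlt b
    rw [hMval, if_pos (by omega)]
    congr 1
    omega
  have hdcoeff : d.coeff δ ≠ 0 := by
    rw [hδ]
    exact leadingCoeff_ne_zero.mpr hdne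
  have hdet : M.det = d.coeff δ ^ k := by
    rw [Matrix.det_of_lowerTriangular M (by
      intro i j hij
      exact hMtri i j (by simpa using hij))]
    simp [hMdiag, Finset.prod_const, Finset.card_univ]
  have hMunit : IsUnit M.det := by
    rw [hdet]
    exact isUnit_iff_ne_zero.mpr (pow_ne_zero _ hdcoeff)
  have hSe : ∀ (c : Fin k → ℂ), S (∑ b' : Fin k, c b' • e b') = M.mulVec c := by
    intro c
    funext b
    rw [map_sum, Finset.sum_apply]
    calc ∑ b' : Fin k, S (c b' • e b') b = ∑ b' : Fin k, M b b' * c b' := by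
          apply Finset.sum_congr rfl
          intro b' _
          rw [_root_.map_smul]
          simp only [Pi.smul_apply, smul_eq_mul, hM, Matrix.of_apply]
          ring
      _ = M.mulVec c b := by simp [Matrix.mulVec, dotProduct]
  have hSsurj : Function.Surjective S := by
    intro u
    refine ⟨∑ b' : Fin k, M⁻¹.mulVec u b' • e b', ?_⟩
    rw [hSe (M⁻¹.mulVec u), Matrix.mulVec_mulVec, Matrix.mul_nonsing_inv _ hMunit,
      Matrix.one_mulVec]
  rw [hker]
  have hrank := LinearMap.finrank_range_add_finrank_ker S
  rw [LinearMap.range_eq_top.mpr hSsurj, finrank_top, Module.finrank_pi, Module.finrank_pi,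
    Fintype.card_fin, Fintype.card_fin] at hrank
  omega
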